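/- arXiv:1505.02322 — 6 statements merged into one kernel-verified Lean document; each statement's English description precedes it below -/
import Mathlib

section
/- Let G = (V,E) and G' = (V',E') be simple undirected graphs, let f and f' be inputs for G and G' respectively, and let p and p' be port numberings of G and G' respectively. If (G,f,v,p) and (G',f',v',p') are r-SV-bisimilar for some r ∈ ℕ, v ∈ V and v' ∈ V', then for every distributed state machine A in class SV, the states of v and v' in the executions of A in (G,f,p) and (G',f',p') satisfy x_t(v) = x'_t(v') for all t = 0,1,...,r. -/
namespace Paper

/-- The degree of a vertex: the number of its neighbours. -/
noncomputable def deg {V : Type} (G : SimpleGraph V) (v : V) : ℕ :=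
  {u | G.Adj v u}.ncard

/-- A port numbering of a graph, modelled as a partial map sending each
output port `(v, i)` with `1 ≤ i ≤ deg v` to an input port `(u, j)` of an
adjacent node `u`, bijectively, such that there is a port between `v` and `u`
if and only if they are adjacent. -/
structure IsPortNumbering {V : Type} (G : SimpleGraph V)
    (pn : V → ℕ → Option (V × ℕ)) : Prop where
  dom : ∀ v i, (pn v i).isSome ↔ 1 ≤ i ∧ i ≤ deg G v
  adj : ∀ v i u j, pn v i = some (u, j) → G.Adj v u ∧ 1 ≤ j ∧ j ≤ deg G u
  bij : ∀ u j, 1 ≤ j → j ≤ deg G u → ∃! vi : V × ℕ, pn vi.1 vi.2 = some (u, j)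
  edge : ∀ v u, G.Adj v u ↔ ∃ i j, pn v i = some (u, j)

/-- A generalised port numbering with port numbers from an arbitrary set `N`:
each node `v` has a set of `deg v` output port numbers (those `o` with
`pn v o ≠ none`) and a set of `deg v` input port numbers (those `i` received
from some output port), and `pn` is a bijection from output ports to input
ports of adjacent nodes. -/
structure IsGenPortNumbering {V N : Type} (G : SimpleGraph V)
    (pn : V → N → Option (V × N)) : Prop where
  adj : ∀ v o u i, pn v o = some (u, i) → G.Adj v u
  edge : ∀ v u, G.Adj v u → ∃ o i, pn v o = some (u, i)
  inj : ∀ v o v' o' u i, pn v o = some (u, i) → pn v' o' = some (u, i) →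
    v = v' ∧ o = o'
  out_card : ∀ v, {o | (pn v o).isSome}.ncard = deg G v
  in_card : ∀ u, {i | ∃ v o, pn v o = some (u, i)}.ncard = deg G u

/-- `r`-SV-bisimilarity of `(G, f, v, p)` and `(G', f', v', p')`. -/
def SVBisim {V V' X N : Type} (G : SimpleGraph V) (G' : SimpleGraph V')
    (f : V → X) (f' : V' → X)
    (p : V → N → Option (V × N)) (p' : V' → N → Option (V' × N)) :
    ℕ → V → V' → Prop
  | 0, v, v' => deg G v = deg G' v' ∧ f v = f' v'
  | r + 1, v, v' =>
      (deg G v = deg G' v' ∧ f v = f' v') ∧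
      (∀ w, G.Adj v w → ∃ w', G'.Adj v' w' ∧
        SVBisim G G' f f' p p' r w w' ∧
        ∃ a b c, p w a = some (v, b) ∧ p' w' a = some (v', c)) ∧
      (∀ w', G'.Adj v' w' → ∃ w, G.Adj v w ∧
        SVBisim G G' f f' p p' r w w' ∧
        ∃ a b c, p w a = some (v, b) ∧ p' w' a = some (v', c))

/-- A distributed state machine for `(F(Δ), X)`: a set of states `Y`,
a finite set `Z` of stopping states, an initialisation function, a message
set `M` with a special symbol `eps` ("no message"), a message-construction
function `msg` and a transition function `trans`. -/
structure DSM (Δ : ℕ) (X : Type) where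
  Y : Type
  Z : Set Y
  Zfin : Z.Finite
  init : ℕ → X → Y
  M : Type
  eps : M
  msg : Y → ℕ → M
  trans : Y → (Fin Δ → M) → Y
  halt_msg : ∀ z ∈ Z, ∀ i, msg z i = eps
  halt_trans : ∀ z ∈ Z, ∀ m, trans z m = z

/-- Class `SV`: the state transitions are invariant under the set of the
received message vector. -/
def DSM.InSV {Δ : ℕ} {X : Type} (A : DSM Δ X) : Prop :=
  ∀ (y : A.Y) (a b : Fin Δ → A.M),
    Set.range a = Set.range b → A.trans y a = A.trans y b

/-- Class `MV`: the state transitions are invariant under the multiset of the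
received message vector. -/
def DSM.InMV {Δ : ℕ} {X : Type} (A : DSM Δ X) : Prop :=
  ∀ (y : A.Y) (a b : Fin Δ → A.M),
    (↑(List.ofFn a) : Multiset A.M) = ↑(List.ofFn b) →
      A.trans y a = A.trans y b

open Classical in
/-- The message received by node `v` through its input port `i + 1` when the
nodes are in states `x`: if the port numbering connects some output port
`(u, j)` to `(v, i + 1)`, it is `msg (x u) j`, and otherwise the padding
symbol `eps`. -/
noncomputable def recv {V X : Type} {Δ : ℕ} (A : DSM Δ X)
    (pn : V → ℕ → Option (V × ℕ)) (x : V → A.Y) (v : V) (i : Fin Δ) : A.M :=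
  if h : ∃ uj : V × ℕ, pn uj.1 uj.2 = some (v, (i : ℕ) + 1) then
    A.msg (x h.choose.1) h.choose.2
  else A.eps

/-- `run A G f pn r v` is the state of node `v` in round `r` of the execution
of `A` in `(G, f, pn)`. -/
noncomputable def run {V X : Type} {Δ : ℕ} (A : DSM Δ X) (G : SimpleGraph V)
    (f : V → X) (pn : V → ℕ → Option (V × ℕ)) : ℕ → V → A.Y
  | 0, v => A.init (deg G v) (f v)
  | r + 1, v => A.trans (run A G f pn r v) (fun i => recv A pn (run A G f pn r) v i)

section Aux

variable {V V' X N : Type}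

/-- Each node has at most one output port towards a given neighbour. -/
lemma port_out_unique {G : SimpleGraph V} {p : V → ℕ → Option (V × ℕ)}
    (hp : IsPortNumbering G p) {u : V} {a a' : ℕ} {v : V} {i i' : ℕ}
    (h1 : p u a = some (v, i)) (h2 : p u a' = some (v, i')) : a = a' := by
  classical
  set φ : ℕ → V := fun k => ((p u k).getD (u, 0)).1 with hφ
  have hmaps : ∀ k ∈ Set.Icc 1 (deg G u), φ k ∈ {w | G.Adj u w} := by
    intro k hk
    have hs : (p u k).isSome := (hp.dom u k).2 ⟨hk.1, hk.2⟩
    obtain ⟨⟨w, j⟩, hw⟩ := Option.isSome_iff_exists.mp hs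
    have hadj := (hp.adj u k w j hw).1
    simpa [φ, hw] using hadj
  have himg : φ '' (Set.Icc 1 (deg G u)) = {w | G.Adj u w} := by
    apply Set.Subset.antisymm
    · rintro w ⟨k, hk, rfl⟩; exact hmaps k hk
    · intro w hw
      obtain ⟨k, j, hk⟩ := (hp.edge u w).1 hw
      have hs : (p u k).isSome := by simp [hk]
      have hdom := (hp.dom u k).1 hs
      exact ⟨k, ⟨hdom.1, hdom.2⟩, by simp [φ, hk]⟩
  have hIcc : (Set.Icc 1 (deg G u)).ncard = deg G u := by
    rw [show Set.Icc 1 (deg G u) = ↑(Finset.Icc 1 (deg G u)) by simp,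
      Set.ncard_coe_finset]
    simp [Nat.card_Icc]
  have hinj : Set.InjOn φ (Set.Icc 1 (deg G u)) := by
    apply Set.injOn_of_ncard_image_eq
    · rw [himg]; exact hIcc.symm ▸ rfl
    · exact Set.finite_Icc _ _
  have ha : a ∈ Set.Icc 1 (deg G u) := by
    have := (hp.dom u a).1 (by simp [h1])
    exact ⟨this.1, this.2⟩
  have ha' : a' ∈ Set.Icc 1 (deg G u) := by
    have := (hp.dom u a').1 (by simp [h2])
    exact ⟨this.1, this.2⟩
  apply hinj ha ha'
  simp [φ, h1, h2]

variable {Δ : ℕ} {A : DSM Δ X}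

lemma recv_eq {G : SimpleGraph V} {p : V → ℕ → Option (V × ℕ)}
    (hp : IsPortNumbering G p) (x : V → A.Y) {v : V} {i : Fin Δ} {u : V} {j : ℕ}
    (h : p u j = some (v, (i : ℕ) + 1)) :
    recv A p x v i = A.msg (x u) j := by
  classical
  have hex : ∃ uj : V × ℕ, p uj.1 uj.2 = some (v, (i : ℕ) + 1) := ⟨(u, j), h⟩
  rw [recv, dif_pos hex]
  have hspec := hex.choose_spec
  obtain ⟨hadj, h1, h2⟩ := hp.adj u j v ((i : ℕ) + 1) h
  obtain ⟨vi, _, huniq⟩ := hp.bij v ((i : ℕ) + 1) (by omega) h2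
  have e1 : hex.choose = vi := huniq _ hspec
  have e2 : (u, j) = vi := huniq _ h
  rw [e1, ← e2]

lemma recv_eps {G : SimpleGraph V} {p : V → ℕ → Option (V × ℕ)}
    (hp : IsPortNumbering G p) (x : V → A.Y) {v : V} {i : Fin Δ}
    (h : deg G v < (i : ℕ) + 1) : recv A p x v i = A.eps := by
  classical
  rw [recv, dif_neg]
  rintro ⟨⟨u, j⟩, hu⟩
  have := (hp.adj u j v ((i : ℕ) + 1) hu).2.2
  omega

lemma recv_exists {G : SimpleGraph V} {p : V → ℕ → Option (V × ℕ)}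
    (hp : IsPortNumbering G p) {v : V} {i : Fin Δ} (h : (i : ℕ) + 1 ≤ deg G v) :
    ∃ u j, p u j = some (v, (i : ℕ) + 1) := by
  obtain ⟨⟨u, j⟩, hu, -⟩ := hp.bij v ((i : ℕ) + 1) (by omega) h
  exact ⟨u, j, hu⟩

variable {G : SimpleGraph V} {G' : SimpleGraph V'} {f : V → X} {f' : V' → X}
  {p : V → N → Option (V × N)} {p' : V' → N → Option (V' × N)}

lemma SVBisim.of_succ :
    ∀ r (v : V) (v' : V'), SVBisim G G' f f' p p' (r + 1) v v' →
      SVBisim G G' f f' p p' r v v' := by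
  intro r
  induction r with
  | zero => intro v v' h; exact h.1
  | succ s ih =>
    rintro v v' ⟨h1, h2, h3⟩
    refine ⟨h1, ?_, ?_⟩
    · intro w hw
      obtain ⟨w', hw', hb, hport⟩ := h2 w hw
      exact ⟨w', hw', ih w w' hb, hport⟩
    · intro w' hw'
      obtain ⟨w, hw, hb, hport⟩ := h3 w' hw'
      exact ⟨w, hw, ih w w' hb, hport⟩

lemma SVBisim.mono {r t : ℕ} (h : t ≤ r) {v : V} {v' : V'}
    (hb : SVBisim G G' f f' p p' r v v') : SVBisim G G' f f' p p' t v v' := by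
  obtain ⟨k, rfl⟩ := Nat.exists_eq_add_of_le h
  induction k with
  | zero => exact hb
  | succ n ih => exact ih (Nat.le_add_right _ _) (SVBisim.of_succ _ _ _ hb)

lemma SVBisim.deg_eq {r : ℕ} {v : V} {v' : V'}
    (h : SVBisim G G' f f' p p' r v v') : deg G v = deg G' v' := by
  cases r with
  | zero => exact h.1
  | succ s => exact h.1.1

end Aux

theorem states_eq_of_SVBisim_aux {V V' X : Type} (Δ : ℕ)
    (G : SimpleGraph V) (G' : SimpleGraph V')
    (f : V → X) (f' : V' → X)
    (p : V → ℕ → Option (V × ℕ)) (p' : V' → ℕ → Option (V' × ℕ))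
    (hG : ∀ v, deg G v ≤ Δ) (hG' : ∀ v', deg G' v' ≤ Δ)
    (hp : IsPortNumbering G p) (hp' : IsPortNumbering G' p')
    (A : DSM Δ X) (hA : A.InSV) :
    ∀ t (v : V) (v' : V'), SVBisim G G' f f' p p' t v v' →
      run A G f p t v = run A G' f' p' t v' := by
  intro t
  induction t with
  | zero =>
    intro v v' h
    simp only [run, h.1, h.2]
  | succ t ih =>
    intro v v' h
    have hdeg : deg G v = deg G' v' := h.1.1
    have hb : SVBisim G G' f f' p p' t v v' := SVBisim.of_succ _ _ _ h
    have hx : run A G f p t v = run A G' f' p' t v' := ih v v' hb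
    show A.trans _ _ = A.trans _ _
    rw [← hx]
    apply hA
    apply Set.Subset.antisymm
    · rintro m ⟨i, rfl⟩
      beta_reduce
      simp only [Set.mem_range]
      by_cases hle : (i : ℕ) + 1 ≤ deg G v
      · obtain ⟨u, j, hu⟩ := recv_exists hp hle
        rw [recv_eq hp _ hu]
        have hadj : G.Adj v u := ((hp.adj u j v _ hu).1).symm
        obtain ⟨w', hw', hbw, a₀, b, c, hpw, hpw'⟩ := h.2.1 u hadj
        have : a₀ = j := port_out_unique hp hpw hu
        subst this
        have hc := hp'.adj w' a₀ v' c hpw'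
        have hcΔ : c ≤ Δ := le_trans hc.2.2 (hG' v')
        have hc1 : 1 ≤ c := hc.2.1
        refine ⟨⟨c - 1, by omega⟩, ?_⟩
        have : ((⟨c - 1, by omega⟩ : Fin Δ) : ℕ) + 1 = c := by simp; omega
        rw [recv_eq hp' _ (by rw [this]; exact hpw'), ih u w' hbw]
      · rw [recv_eps hp _ (by omega)]
        exact ⟨i, recv_eps hp' _ (by omega)⟩
    · rintro m ⟨i, rfl⟩
      beta_reduce
      simp only [Set.mem_range]
      by_cases hle : (i : ℕ) + 1 ≤ deg G' v'
      · obtain ⟨u', j, hu'⟩ := recv_exists hp' hle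
        rw [recv_eq hp' _ hu']
        have hadj : G'.Adj v' u' := ((hp'.adj u' j v' _ hu').1).symm
        obtain ⟨w, hw, hbw, a₀, b, c, hpw, hpw'⟩ := h.2.2 u' hadj
        have : a₀ = j := port_out_unique hp' hpw' hu'
        subst this
        have hb' := hp.adj w a₀ v b hpw
        have hbΔ : b ≤ Δ := le_trans hb'.2.2 (hG v)
        have hb1 : 1 ≤ b := hb'.2.1
        refine ⟨⟨b - 1, by omega⟩, ?_⟩
        have : ((⟨b - 1, by omega⟩ : Fin Δ) : ℕ) + 1 = b := by simp; omega
        rw [recv_eq hp _ (by rw [this]; exact hpw), ih w u' hbw]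
      · rw [recv_eps hp' _ (by omega)]
        exact ⟨i, recv_eps hp _ (by omega)⟩

/-- If `(G, f, v, p)` and `(G', f', v', p')` are `r`-SV-bisimilar, then for
every distributed state machine `A` in class `SV`, the states of `v` and `v'`
in the executions of `A` in `(G, f, p)` and `(G', f', p')` are identical in
rounds `0, 1, …, r`. -/
theorem states_eq_of_SVBisim {V V' X : Type} [Finite X] (Δ : ℕ)
    (G : SimpleGraph V) (G' : SimpleGraph V')
    (f : V → X) (f' : V' → X)
    (p : V → ℕ → Option (V × ℕ)) (p' : V' → ℕ → Option (V' × ℕ))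
    (hG : ∀ v, deg G v ≤ Δ) (hG' : ∀ v', deg G' v' ≤ Δ)
    (hp : IsPortNumbering G p) (hp' : IsPortNumbering G' p')
    (r : ℕ) (v : V) (v' : V')
    (hbisim : SVBisim G G' f f' p p' r v v')
    (A : DSM Δ X) (hA : A.InSV) :
    ∀ t ≤ r, run A G f p t v = run A G' f' p' t v' := by
  intro t ht
  exact states_eq_of_SVBisim_aux Δ G G' f f' p p' hG hG' hp hp' A hA t v v' (SVBisim.mono ht hbisim)

end Paper
end

section
/- Let G = (V,E) and G' = (V',E') be graphs, let f and f' be inputs for G and G' respectively, and let p and p' be generalised port numberings of G and G' respectively, with port numbers taken from a set N. Suppose q and q' are port numberings of G and G' respectively such that, for some function g : N → ℕ₊, p(v,i) = (u,j) implies q(v,g(i)) = (u,g(j)) and p'(v,i) = (u,j) implies q'(v,g(i)) = (u,g(j)). Then (G,f,v,p) ≡_r (G',f',v',p') implies (G,f,v,q) ≡_r (G',f',v',q') for all v ∈ V, v' ∈ V' and r ∈ ℕ. -/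
namespace Paper

/-- If the port numberings `q`, `q'` are obtained from the generalised port
numberings `p`, `p'` via a renaming `g` of port numbers, then
`r`-SV-bisimilarity with respect to `p`, `p'` implies `r`-SV-bisimilarity
with respect to `q`, `q'`. -/
theorem SVBisim_of_portChange {V V' X N : Type}
    (G : SimpleGraph V) (G' : SimpleGraph V')
    (f : V → X) (f' : V' → X)
    (p : V → N → Option (V × N)) (p' : V' → N → Option (V' × N))
    (hp : IsGenPortNumbering G p) (hp' : IsGenPortNumbering G' p')
    (q : V → ℕ → Option (V × ℕ)) (q' : V' → ℕ → Option (V' × ℕ))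
    (hq : IsPortNumbering G q) (hq' : IsPortNumbering G' q')
    (g : N → ℕ) (hg : ∀ x, 0 < g x)
    (hpq : ∀ v i u j, p v i = some (u, j) → q v (g i) = some (u, g j))
    (hpq' : ∀ v i u j, p' v i = some (u, j) → q' v (g i) = some (u, g j)) :
    ∀ (r : ℕ) (v : V) (v' : V'),
      SVBisim G G' f f' p p' r v v' → SVBisim G G' f f' q q' r v v' := by
  intro r
  induction r with
  | zero => intro v v' h; exact h
  | succ r ih =>
    intro v v' h
    obtain ⟨h0, h1, h2⟩ := h
    refine ⟨h0, ?_, ?_⟩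
    · intro w hw
      obtain ⟨w', hw', hb, a, b, c, hpa, hpa'⟩ := h1 w hw
      exact ⟨w', hw', ih w w' hb, g a, g b, g c, hpq w a v b hpa, hpq' w' a v' c hpa'⟩
    · intro w' hw'
      obtain ⟨w, hw, hb, a, b, c, hpa, hpa'⟩ := h2 w' hw'
      exact ⟨w, hw, ih w w' hb, g a, g b, g c, hpq w a v b hpa, hpq' w' a v' c hpa'⟩

end Paper
end

section
/- For each d ≥ 2, every node v ∈ V_d of the graph G_d and every a ∈ {0,1,...,d}, there is at most one node u ∈ V_d such that {v,u} ∈ E_d and π_d(u,v) = a. -/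
namespace Paper

/-- Nodes of the tree `G_d` are finite sequences of pairs of numbers.
We represent a sequence `(a₁, …, a_i)` as the list `[a_i, …, a₁]`, i.e. in
reverse order, so that consing corresponds to appending a pair at the end. -/
abbrev Nd : Type := ℕ × ℕ

/-- `b₂⁺`: `1` if `b₂ = 0`, and `b₂` otherwise. -/
def bplus (b : ℕ) : ℕ := if b = 0 then 1 else b

/-- For `j ≥ 1`, the `j`-th smallest element of `{lo, lo+1, lo+2, …} \ {f}`.
This realises the greedy choices `c^j = min({lo,…} \ {f, c¹, …, c^{j-1}})`. -/
def nthAvoid (lo f j : ℕ) : ℕ :=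
  if lo + j - 1 < f ∨ f < lo then lo + j - 1 else lo + j

/-- The node set `V_d` of the graph `G_d`, given by the rules (G1)–(G4).
(Sequences are represented as reversed lists, the head being the last pair
`a_i` of the sequence.) -/
inductive Vd (d : ℕ) : List Nd → Prop
  /-- (G1): the empty sequence is a node. -/
  | nil : Vd d []
  /-- (G2): the sequences `((1,0)), ((2,1)), …, ((d,d−1))` are nodes. -/
  | base (k : ℕ) (h1 : 1 ≤ k) (h2 : k ≤ d) : Vd d [(k, k - 1)]
  /-- (G3): children of a node of odd length `< 2d` with last pair `(b₁, b₂)`: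
  for `j = 1, …, d−1` append `(c₁ʲ, c₂ʲ)` where `c₁ʲ` is the `j`-th smallest
  element of `{1,…,d} \ {b₂⁺}` and `c₂ʲ` the `j`-th smallest of `{1,…,d} \ {b₁}`. -/
  | odd (b₁ b₂ : ℕ) (rest : List Nd)
      (hv : Vd d ((b₁, b₂) :: rest))
      (hodd : Odd ((b₁, b₂) :: rest).length)
      (hlt : ((b₁, b₂) :: rest).length < 2 * d)
      (j : ℕ) (hj1 : 1 ≤ j) (hj2 : j ≤ d - 1) :
      Vd d ((nthAvoid 1 (bplus b₂) j, nthAvoid 1 b₁ j) :: (b₁, b₂) :: rest)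
  /-- (G4): children of a node of even positive length `< 2d` with last pair
  `(b₁, b₂)`: for `j = 1, …, d−1` append `(c₁ʲ, c₂ʲ)` where `c₁ʲ` is the `j`-th
  smallest element of `{1,…,d} \ {b₂}` and `c₂ʲ` the `j`-th smallest of
  `{0,…,d−1} \ {b₁}`. -/
  | even (b₁ b₂ : ℕ) (rest : List Nd)
      (hv : Vd d ((b₁, b₂) :: rest))
      (heven : Even ((b₁, b₂) :: rest).length)
      (hlt : ((b₁, b₂) :: rest).length < 2 * d)
      (j : ℕ) (hj1 : 1 ≤ j) (hj2 : j ≤ d - 1) :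
      Vd d ((nthAvoid 1 b₂ j, nthAvoid 0 b₁ j) :: (b₁, b₂) :: rest)

/-- The edge relation of `G_d`: `u` is a child of `v` or vice versa. -/
def Ed (d : ℕ) (v u : List Nd) : Prop :=
  Vd d v ∧ Vd d u ∧ ∃ a : Nd, u = a :: v ∨ v = a :: u

/-- The outgoing port number `π_d(v, u)` from `v` towards an adjacent node `u`:
if `u = (b₁, b₂) :: v` is a child of `v` then `b₁`, and if `v = (b₁, b₂) :: u`
is a child of `u` then `b₂`. -/
def outPort (v u : List Nd) : ℕ :=
  if u.length = v.length + 1 then u.headI.1 else v.headI.2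

/-- A pair of compatible walks (PCW) of length `k` in `G_d`:
two walks starting at `((1,0))` and `((2,1))` such that the outgoing port
numbers backwards along the walks coincide. -/
structure IsPCW (d k : ℕ) (w₁ w₂ : ℕ → List Nd) : Prop where
  klen : k ≤ 2 * d - 3
  walk₁ : ∀ j < k, Ed d (w₁ j) (w₁ (j + 1))
  walk₂ : ∀ j < k, Ed d (w₂ j) (w₂ (j + 1))
  start₁ : w₁ 0 = [(1, 0)]
  start₂ : w₂ 0 = [(2, 1)]
  compat : ∀ j, 1 ≤ j → j ≤ k →
    outPort (w₁ j) (w₁ (j - 1)) = outPort (w₂ j) (w₂ (j - 1))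

/-- A pair of separating walks (PSW): a PCW such that the last node of the
first walk has a neighbour whose outgoing port number towards it is matched
by no neighbour of the last node of the second walk. -/
structure IsPSW (d k : ℕ) (w₁ w₂ : ℕ → List Nd)
    extends IsPCW d k w₁ w₂ : Prop where
  sep : ∃ x, Ed d (w₁ k) x ∧
    ∀ y, Ed d (w₂ k) y → outPort x (w₁ k) ≠ outPort y (w₂ k)

/-- A PSW of length `k` in `G_d` is critical if there is no strictly shorter
PSW in `G_d`. -/
def IsCriticalPSW (d k : ℕ) (w₁ w₂ : ℕ → List Nd) : Prop :=
  IsPSW d k w₁ w₂ ∧ ∀ k' w₁' w₂', IsPSW d k' w₁' w₂' → k ≤ k'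

lemma nthAvoid_inj {lo f j j' : ℕ} (hj : 1 ≤ j) (hj' : 1 ≤ j')
    (h : nthAvoid lo f j = nthAvoid lo f j') : j = j' := by
  unfold nthAvoid at h; split_ifs at h <;> omega

lemma nthAvoid_ne {lo f j : ℕ} (hj : 1 ≤ j) : nthAvoid lo f j ≠ f := by
  unfold nthAvoid; split_ifs <;> omega

/-- Two children of the same node whose appended pairs have the same second
component coincide. -/
lemma child_eq {d : ℕ} {p p' : Nd} {v : List Nd}
    (h : Vd d (p :: v)) (h' : Vd d (p' :: v)) (heq : p.2 = p'.2) : p = p' := by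
  cases h with
  | base k h1 h2 =>
    cases h' with
    | base k' h1' h2' =>
      simp only [Prod.mk.injEq] at *
      omega
  | odd b₁ b₂ rest hv hodd hlt j hj1 hj2 =>
    cases h' with
    | odd _ _ _ hv' hodd' hlt' j' hj1' hj2' =>
      have : j = j' := nthAvoid_inj hj1 hj1' heq
      subst this; rfl
    | even _ _ _ hv' heven' hlt' j' hj1' hj2' =>
      exact absurd hodd (Nat.not_odd_iff_even.mpr heven')
  | even b₁ b₂ rest hv heven hlt j hj1 hj2 =>
    cases h' with
    | odd _ _ _ hv' hodd' hlt' j' hj1' hj2' =>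
      exact absurd hodd' (Nat.not_odd_iff_even.mpr heven)
    | even _ _ _ hv' heven' hlt' j' hj1' hj2' =>
      have : j = j' := nthAvoid_inj hj1 hj1' heq
      subst this; rfl

/-- The port from a child towards its parent never equals the port from the
parent towards its own parent. -/
lemma child_port_ne {d : ℕ} {p b : Nd} {rest : List Nd}
    (h : Vd d (p :: b :: rest)) : p.2 ≠ b.1 := by
  cases h with
  | odd b₁ b₂ rest hv hodd hlt j hj1 hj2 => exact nthAvoid_ne hj1
  | even b₁ b₂ rest hv heven hlt j hj1 hj2 => exact nthAvoid_ne hj1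

/-- For every node `v ∈ V_d` and every `a ∈ {0, 1, …, d}` there is at most
one node `u` with `{v, u} ∈ E_d` and `π_d(u, v) = a`. -/
theorem Gd_port_unique (d : ℕ) (hd : 2 ≤ d) (v : List Nd) (hv : Vd d v)
    (a : ℕ) (ha : a ≤ d) (u u' : List Nd)
    (hu : Ed d v u) (hu' : Ed d v u')
    (hπ : outPort u v = a) (hπ' : outPort u' v = a) :
    u = u' := by
  obtain ⟨-, hvu, p, hp⟩ := hu
  obtain ⟨-, hvu', p', hp'⟩ := hu'
  have hπa : outPort u v = outPort u' v := by rw [hπ, hπ']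
  rcases hp with hp | hp <;> rcases hp' with hp' | hp'
  · -- both children
    subst hp; subst hp'
    have h1 : outPort (p :: v) v = p.2 := by
      simp only [outPort, List.length_cons]
      rw [if_neg (by omega)]; rfl
    have h2 : outPort (p' :: v) v = p'.2 := by
      simp only [outPort, List.length_cons]
      rw [if_neg (by omega)]; rfl
    rw [h1, h2] at hπa
    rw [child_eq hvu hvu' hπa]
  · -- u child, u' parent
    subst hp; subst hp'
    have h1 : outPort (p :: (p' :: u')) (p' :: u') = p.2 := by
      simp only [outPort, List.length_cons]
      rw [if_neg (by omega)]; rfl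
    have h2 : outPort u' (p' :: u') = p'.1 := by
      simp only [outPort, List.length_cons]
      rw [if_pos trivial]; rfl
    rw [h1, h2] at hπa
    exact absurd hπa (child_port_ne hvu)
  · -- u parent, u' child
    subst hp; subst hp'
    have h1 : outPort u (p :: u) = p.1 := by
      simp only [outPort, List.length_cons]
      rw [if_pos trivial]; rfl
    have h2 : outPort (p' :: (p :: u)) (p :: u) = p'.2 := by
      simp only [outPort, List.length_cons]
      rw [if_neg (by omega)]; rfl
    rw [h1, h2] at hπa
    exact absurd hπa.symm (child_port_ne hvu')
  · -- both parents
    rw [hp] at hp'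
    exact (List.cons.injEq _ _ _ _ ▸ hp' : _ ∧ _).2.symm ▸ rfl

end Paper
end

section
/- Let v = (a₁,...,a_i) ∈ V_d with i < 2d. If i is odd, then for every a ∈ {1,...,d} there exists u ∈ V_d with {v,u} ∈ E_d and π_d(u,v) = a. If i is even, then either for all a ∈ {0,1,...,d−1} or for all a ∈ {0,1,...,d−2,d} there exists u ∈ V_d with {v,u} ∈ E_d and π_d(u,v) = a; moreover, in the even case, if π_d(u,v) = d then u is the parent of v. -/
namespace Paper

lemma nthAvoid_le (lo f j : ℕ) : nthAvoid lo f j ≤ lo + j := by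
  unfold nthAvoid; split <;> omega

lemma Vd_tail {d : ℕ} {a : Nd} {rest : List Nd} (h : Vd d (a :: rest)) :
    Vd d rest := by
  cases h with
  | base k h1 h2 => exact Vd.nil
  | odd b₁ b₂ r hv _ _ _ _ _ => exact hv
  | even b₁ b₂ r hv _ _ _ _ _ => exact hv

lemma Vd_head_bounds {d : ℕ} (hd : 1 ≤ d) {b₁ b₂ : ℕ} {rest : List Nd}
    (h : Vd d ((b₁, b₂) :: rest)) :
    b₁ ≤ d ∧ (Odd ((b₁, b₂) :: rest).length → 1 ≤ b₁) := by
  cases h with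
  | base k h1 h2 => exact ⟨h2, fun _ => h1⟩
  | odd c₁ c₂ r hv hodd hlt j hj1 hj2 =>
    refine ⟨?_, ?_⟩
    · have := nthAvoid_le 1 (bplus c₂) j; omega
    · intro ho; exfalso
      simp [Nat.odd_iff, List.length_cons] at hodd ho
      omega
  | even c₁ c₂ r hv he hlt j hj1 hj2 =>
    refine ⟨?_, fun _ => ?_⟩
    · have := nthAvoid_le 1 c₂ j; omega
    · unfold nthAvoid; split <;> omega

lemma Vd_child_even_port {d : ℕ} {c : Nd} {b₁ b₂ : ℕ} {rest : List Nd}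
    (h : Vd d (c :: (b₁, b₂) :: rest)) (heven : Even ((b₁, b₂) :: rest).length) :
    c.2 ≤ d - 1 := by
  cases h with
  | odd c₁ c₂ r hv hodd hlt j hj1 hj2 =>
    exfalso
    simp [Nat.odd_iff, Nat.even_iff] at hodd heven
    omega
  | even c₁ c₂ r hv he hlt j hj1 hj2 =>
    show nthAvoid 0 b₁ j ≤ d - 1
    unfold nthAvoid; split <;> omega

lemma outPort_child (c : Nd) (v : List Nd) : outPort (c :: v) v = c.2 := by
  simp only [outPort, List.length_cons, List.headI]
  rw [if_neg (by omega)]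

lemma outPort_parent (c : Nd) (v : List Nd) : outPort v (c :: v) = c.1 := by
  simp [outPort]

/-- Existence of incoming port numbers at a node `v = (a₁, …, a_i)` of `G_d`
with `i < 2d`: if `i` is odd, every `a ∈ {1, …, d}` is realised by a
neighbour; if `i` is even, either all of `{0, …, d−1}` or all of
`{0, …, d−2, d}` are realised, and in the even case a neighbour `u` with
`π_d(u, v) = d` is the parent of `v`. -/
theorem Gd_port_exists (d : ℕ) (hd : 2 ≤ d) (v : List Nd) (hv : Vd d v)
    (hlen : v.length < 2 * d) :
    (Odd v.length →
      ∀ a, 1 ≤ a → a ≤ d → ∃ u, Ed d v u ∧ outPort u v = a) ∧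
    (Even v.length →
      ((∀ a, a ≤ d - 1 → ∃ u, Ed d v u ∧ outPort u v = a) ∨
        (∀ a, (a ≤ d - 2 ∨ a = d) → ∃ u, Ed d v u ∧ outPort u v = a)) ∧
      (∀ u, Ed d v u → outPort u v = d → ∃ b : Nd, v = b :: u)) := by
  constructor
  · -- odd length
    intro hodd a ha1 ha2
    match v, hv, hodd, hlen with
    | (b₁, b₂) :: rest, hv, hodd, hlen =>
      have hb := Vd_head_bounds (by omega) hv
      have hb1 : 1 ≤ b₁ := hb.2 hodd
      have hb2 : b₁ ≤ d := hb.1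
      by_cases hab : a = b₁
      · -- the parent realises a = b₁
        refine ⟨rest, ⟨hv, Vd_tail hv, ⟨(b₁, b₂), Or.inr rfl⟩⟩, ?_⟩
        rw [outPort_parent]; omega
      · -- a child realises a ≠ b₁
        rcases Nat.lt_or_ge a b₁ with hlt' | hge
        · refine ⟨_, ⟨hv, Vd.odd b₁ b₂ rest hv hodd hlen a ha1 (by omega), ⟨_, Or.inl rfl⟩⟩, ?_⟩
          rw [outPort_child]
          show nthAvoid 1 b₁ a = a
          unfold nthAvoid; split <;> omega
        · refine ⟨_, ⟨hv, Vd.odd b₁ b₂ rest hv hodd hlen (a - 1) (by omega) (by omega),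
            ⟨_, Or.inl rfl⟩⟩, ?_⟩
          rw [outPort_child]
          show nthAvoid 1 b₁ (a - 1) = a
          unfold nthAvoid; split <;> omega
  · -- even length
    intro heven
    match v, hv, heven, hlen with
    | [], _, _, _ =>
      constructor
      · left
        intro a ha
        have hbase : Vd d [(a + 1, a)] := by
          have := Vd.base (d := d) (a + 1) (by omega) (by omega)
          simpa using this
        refine ⟨[(a + 1, a)], ⟨Vd.nil, hbase, ⟨(a + 1, a), Or.inl rfl⟩⟩, ?_⟩
        rw [outPort_child]
      · intro u hEd hport
        obtain ⟨-, hu, c, hc | hc⟩ := hEd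
        · subst hc
          cases hu with
          | base k h1 h2 =>
            rw [outPort_child] at hport
            simp at hport
            omega
        · exact absurd hc (by simp)
    | (b₁, b₂) :: rest, hv, heven, hlen =>
      have hb2 : b₁ ≤ d := (Vd_head_bounds (by omega) hv).1
      have hparent : Ed d ((b₁, b₂) :: rest) rest ∧
          outPort rest ((b₁, b₂) :: rest) = b₁ :=
        ⟨⟨hv, Vd_tail hv, ⟨(b₁, b₂), Or.inr rfl⟩⟩, outPort_parent _ _⟩
      have hchild : ∀ j, 1 ≤ j → j ≤ d - 1 →
          ∃ u, Ed d ((b₁, b₂) :: rest) u ∧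
            outPort u ((b₁, b₂) :: rest) = nthAvoid 0 b₁ j := by
        intro j hj1 hj2
        exact ⟨_, ⟨hv, Vd.even b₁ b₂ rest hv heven hlen j hj1 hj2,
          ⟨_, Or.inl rfl⟩⟩, outPort_child _ _⟩
      constructor
      · by_cases hbd : b₁ = d
        · right
          intro a ha
          rcases ha with ha | ha
          · obtain ⟨u, hu, hp⟩ := hchild (a + 1) (by omega) (by omega)
            refine ⟨u, hu, ?_⟩
            rw [hp]; unfold nthAvoid; split <;> omega
          · exact ⟨rest, hparent.1, by rw [hparent.2]; omega⟩
        · left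
          intro a ha
          by_cases hab : a = b₁
          · exact ⟨rest, hparent.1, by rw [hparent.2]; omega⟩
          · rcases Nat.lt_or_ge a b₁ with hlt' | hge
            · obtain ⟨u, hu, hp⟩ := hchild (a + 1) (by omega) (by omega)
              refine ⟨u, hu, ?_⟩
              rw [hp]; unfold nthAvoid; split <;> omega
            · obtain ⟨u, hu, hp⟩ := hchild a (by omega) (by omega)
              refine ⟨u, hu, ?_⟩
              rw [hp]; unfold nthAvoid; split <;> omega
      · intro u hEd hport
        obtain ⟨-, hu, c, hc | hc⟩ := hEd
        · subst hc
          rw [outPort_child] at hport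
          have := Vd_child_even_port hu heven
          omega
        · exact ⟨c, hc⟩

end Paper
end

section
/- If there is a pair of separating walks of length k in G_d, then there is a pair of separating walks of length k+2 in G_{d+1}. -/
namespace Paper

section Helpers

lemma nthAvoid_low (lo f j : ℕ) (h : lo + j - 1 < f ∨ f < lo) :
    nthAvoid lo f j = lo + j - 1 := if_pos h

lemma nthAvoid_high (lo f j : ℕ) (h : lo ≤ f) (h' : f ≤ lo + j - 1) :
    nthAvoid lo f j = lo + j := if_neg (by omega)

lemma nthAvoid_ge (lo f j : ℕ) : lo + j - 1 ≤ nthAvoid lo f j := by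
  unfold nthAvoid; split <;> omega

lemma Vd.sub {d : ℕ} {a : Nd} {l : List Nd} (h : Vd d (a :: l)) : Vd d l := by
  cases h with
  | base k h1 h2 => exact Vd.nil
  | odd b₁ b₂ rest hv hodd hlt j hj1 hj2 => exact hv
  | even b₁ b₂ rest hv heven hlt j hj1 hj2 => exact hv

lemma Vd.mono {d : ℕ} {l : List Nd} (h : Vd d l) : Vd (d + 1) l := by
  induction h with
  | nil => exact Vd.nil
  | base k h1 h2 => exact Vd.base k h1 (by omega)
  | odd b₁ b₂ rest hv hodd hlt j hj1 hj2 ih =>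
      exact Vd.odd b₁ b₂ rest ih hodd (by omega) j hj1 (by omega)
  | even b₁ b₂ rest hv heven hlt j hj1 hj2 ih =>
      exact Vd.even b₁ b₂ rest ih heven (by omega) j hj1 (by omega)

lemma Vd.bnd {d : ℕ} {l : List Nd} (h : Vd d l) :
    ∀ a : Nd, ∀ r : List Nd, l = a :: r →
      1 ≤ a.1 ∧ a.1 ≤ d ∧ (l.length % 2 = 1 → a.2 + 1 ≤ d) ∧
        (l.length % 2 = 0 → 1 ≤ a.2 ∧ a.2 ≤ d) := by
  induction h with
  | nil => intro a r h; exact absurd h (by simp)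
  | base k h1 h2 =>
      intro a r h
      injection h with e1 e2
      subst e1
      refine ⟨h1, h2, fun _ => ?_, fun hc => ?_⟩
      · show k - 1 + 1 ≤ d; omega
      · simp at hc
  | odd b₁ b₂ rest hv hodd hlt j hj1 hj2 ih =>
      intro a r h
      injection h with e1 e2
      subst e1
      rw [Nat.odd_iff] at hodd
      have g1 := nthAvoid_ge 1 (bplus b₂) j
      have g2 := nthAvoid_le 1 (bplus b₂) j
      have g3 := nthAvoid_ge 1 b₁ j
      have g4 := nthAvoid_le 1 b₁ j
      simp only [List.length_cons] at hodd ⊢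
      refine ⟨?_, ?_, fun hc => ?_, fun _ => ⟨?_, ?_⟩⟩
      · show 1 ≤ nthAvoid 1 (bplus b₂) j; omega
      · show nthAvoid 1 (bplus b₂) j ≤ d; omega
      · exact absurd hc (by omega)
      · show 1 ≤ nthAvoid 1 b₁ j; omega
      · show nthAvoid 1 b₁ j ≤ d; omega
  | even b₁ b₂ rest hv heven hlt j hj1 hj2 ih =>
      intro a r h
      injection h with e1 e2
      subst e1
      rw [Nat.even_iff] at heven
      have g1 := nthAvoid_ge 1 b₂ j
      have g2 := nthAvoid_le 1 b₂ j
      have g3 := nthAvoid_ge 0 b₁ j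
      have g4 := nthAvoid_le 0 b₁ j
      simp only [List.length_cons] at heven ⊢
      refine ⟨?_, ?_, fun _ => ?_, fun hc => ?_⟩
      · show 1 ≤ nthAvoid 1 b₂ j; omega
      · show nthAvoid 1 b₂ j ≤ d; omega
      · show nthAvoid 0 b₁ j + 1 ≤ d; omega
      · exact absurd hc (by omega)

lemma Vd.inv {d : ℕ} {a : Nd} {l : List Nd} (h : Vd d (a :: l)) :
    (l = [] ∧ 1 ≤ a.1 ∧ a.1 ≤ d ∧ a.2 = a.1 - 1) ∨
    (∃ b : Nd, ∃ r : List Nd, ∃ j : ℕ, l = b :: r ∧ 1 ≤ j ∧ j ≤ d - 1 ∧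
      ((l.length % 2 = 1 ∧ a = (nthAvoid 1 (bplus b.2) j, nthAvoid 1 b.1 j)) ∨
       (l.length % 2 = 0 ∧ a = (nthAvoid 1 b.2 j, nthAvoid 0 b.1 j)))) := by
  cases h with
  | base k h1 h2 => exact Or.inl ⟨rfl, h1, h2, rfl⟩
  | odd b₁ b₂ rest hv hodd hlt j hj1 hj2 =>
      exact Or.inr ⟨(b₁, b₂), rest, j, rfl, hj1, hj2,
        Or.inl ⟨Nat.odd_iff.mp hodd, rfl⟩⟩
  | even b₁ b₂ rest hv heven hlt j hj1 hj2 =>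
      exact Or.inr ⟨(b₁, b₂), rest, j, rfl, hj1, hj2,
        Or.inr ⟨Nat.even_iff.mp heven, rfl⟩⟩

lemma outPort_down (a : Nd) (v : List Nd) : outPort (a :: v) v = a.2 := by
  unfold outPort
  rw [if_neg (by simp only [List.length_cons]; omega)]
  rfl

lemma outPort_up (a : Nd) (v : List Nd) : outPort v (a :: v) = a.1 := by
  unfold outPort
  rw [if_pos (by simp only [List.length_cons])]
  rfl

lemma Ed.down {m : ℕ} {v : List Nd} {a : Nd} (hv : Vd m v) (hu : Vd m (a :: v)) :
    Ed m v (a :: v) := ⟨hv, hu, a, Or.inl rfl⟩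

lemma Ed.up {m : ℕ} {v : List Nd} {a : Nd} (hv : Vd m v) (hu : Vd m (a :: v)) :
    Ed m (a :: v) v := ⟨hu, hv, a, Or.inr rfl⟩

lemma Ed.mono {d : ℕ} {v u : List Nd} (h : Ed d v u) : Ed (d + 1) v u :=
  ⟨h.1.mono, h.2.1.mono, h.2.2⟩

lemma walk_bound {d k : ℕ} {w : ℕ → List Nd} (h0 : (w 0).length = 1)
    (hw : ∀ j < k, Ed d (w j) (w (j + 1))) :
    ∀ j, j ≤ k → (w j).length ≤ j + 1 ∧ (w j).length % 2 = (j + 1) % 2 := by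
  intro j
  induction j with
  | zero => intro _; omega
  | succ n ih =>
      intro hle
      obtain ⟨hn1, hn2⟩ := ih (by omega)
      obtain ⟨_, _, a, hc | hc⟩ := hw n (by omega)
      · have : (w (n + 1)).length = (w n).length + 1 := by rw [hc]; rfl
        omega
      · have : (w n).length = (w (n + 1)).length + 1 := by rw [hc]; rfl
        omega

end Helpers
section Ports

lemma port_odd_range {d : ℕ} {v y : List Nd} (hv : Vd d v) (hlen : v.length % 2 = 1)
    (he : Ed d v y) : 1 ≤ outPort y v ∧ outPort y v ≤ d := by
  obtain ⟨_, hy, a, hc | hc⟩ := he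
  · subst hc
    rw [outPort_down]
    rcases Vd.inv hy with ⟨rfl, h1, h2, ha⟩ | ⟨b, r, j, rfl, hj1, hj2, ⟨hpar, rfl⟩ | ⟨hpar, rfl⟩⟩
    · simp at hlen
    · have g3 := nthAvoid_ge 1 b.1 j
      have g4 := nthAvoid_le 1 b.1 j
      constructor
      · show 1 ≤ nthAvoid 1 b.1 j; omega
      · show nthAvoid 1 b.1 j ≤ d; omega
    · exact absurd hpar (by omega)
  · rw [hc, outPort_up]
    have := Vd.bnd hv a y hc
    exact ⟨this.1, this.2.1⟩

lemma port_even_cases {m : ℕ} {v y : List Nd} (hlen : v.length % 2 = 0)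
    (he : Ed m v y) :
    (∃ a r, v = a :: r ∧ outPort y v = a.1) ∨
    (v = [] ∧ ∃ kk, 1 ≤ kk ∧ kk ≤ m ∧ outPort y v = kk - 1) ∨
    (∃ a r, v = a :: r ∧ ∃ j, 1 ≤ j ∧ j ≤ m - 1 ∧ outPort y v = nthAvoid 0 a.1 j) := by
  obtain ⟨_, hy, a, hc | hc⟩ := he
  · subst hc
    rw [outPort_down]
    rcases Vd.inv hy with ⟨rfl, h1, h2, ha⟩ | ⟨b, r, j, rfl, hj1, hj2, ⟨hpar, rfl⟩ | ⟨hpar, rfl⟩⟩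
    · exact Or.inr (Or.inl ⟨rfl, a.1, h1, h2, ha⟩)
    · exact absurd hpar (by omega)
    · exact Or.inr (Or.inr ⟨b, r, rfl, j, hj1, hj2, rfl⟩)
  · exact Or.inl ⟨a, y, hc, by rw [hc, outPort_up]⟩

lemma follow_odd_exists {d : ℕ} {v : List Nd} (hv : Vd d v) (hlen : v.length % 2 = 1)
    (hlt : v.length < 2 * d) {p : ℕ} (hp1 : 1 ≤ p) (hp2 : p ≤ d) :
    ∃ y, Ed d v y ∧ outPort y v = p := by
  rcases v with _ | ⟨⟨b₁, b₂⟩, r⟩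
  · simp at hlen
  · obtain ⟨hb1, hb2, _, _⟩ := Vd.bnd hv (b₁, b₂) r rfl
    by_cases hpb : p = b₁
    · exact ⟨r, Ed.up hv.sub hv, by rw [outPort_up]; exact hpb.symm⟩
    · rcases Nat.lt_or_ge p b₁ with hlt' | hge
      · have hc2 : nthAvoid 1 b₁ p = p := by
          rw [nthAvoid_low 1 b₁ p (by omega)]; omega
        refine ⟨_, Ed.down hv (Vd.odd b₁ b₂ r hv (Nat.odd_iff.mpr hlen) hlt p hp1 (by omega)), ?_⟩
        rw [outPort_down]; exact hc2
      · have hc2 : nthAvoid 1 b₁ (p - 1) = p := by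
          rw [nthAvoid_high 1 b₁ (p - 1) (by omega) (by omega)]; omega
        refine ⟨_, Ed.down hv (Vd.odd b₁ b₂ r hv (Nat.odd_iff.mpr hlen) hlt (p - 1) (by omega) (by omega)), ?_⟩
        rw [outPort_down]; exact hc2

lemma follow_even_exists {d : ℕ} {v : List Nd} (hv : Vd d v) (hlen : v.length % 2 = 0)
    (hlt : v.length < 2 * d) {p : ℕ}
    (hp : (v = [] ∧ p + 1 ≤ d) ∨
      ∃ a r, v = a :: r ∧ (p = a.1 ∨ (p + 1 ≤ d ∧ (a.1 ≤ p ∨ p + 2 ≤ d)))) :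
    ∃ y, Ed d v y ∧ outPort y v = p := by
  rcases v with _ | ⟨⟨b₁, b₂⟩, r⟩
  · obtain ⟨_, hpd⟩ | ⟨a, r, h, _⟩ := hp
    · refine ⟨[(p + 1, p)], Ed.down Vd.nil ?_, by rw [outPort_down]⟩
      have := Vd.base (d := d) (p + 1) (by omega) (by omega)
      simpa using this
    · exact absurd h (by simp)
  · obtain ⟨hb1, hb2, _, _⟩ := Vd.bnd hv (b₁, b₂) r rfl
    rcases hp with ⟨h, _⟩ | ⟨a, r', heq, hcase⟩
    · exact absurd h (by simp)
    · injection heq with e1 e2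
      subst e1
      subst e2
      rcases hcase with rfl | ⟨hpd, hor⟩
      · exact ⟨r, Ed.up hv.sub hv, by rw [outPort_up]⟩
      · by_cases hpb : p = b₁
        · exact ⟨r, Ed.up hv.sub hv, by rw [outPort_up]; exact hpb.symm⟩
        · rcases Nat.lt_or_ge p b₁ with hlt' | hge
          · have hp2d : p + 2 ≤ d := by
              rcases hor with h | h
              · simp only [] at h; omega
              · exact h
            have hc2 : nthAvoid 0 b₁ (p + 1) = p := by
              rw [nthAvoid_low 0 b₁ (p + 1) (by omega)]; omega
            refine ⟨_, Ed.down hv (Vd.even b₁ b₂ r hv (Nat.even_iff.mpr hlen) hlt (p + 1) (by omega) (by omega)), ?_⟩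
            rw [outPort_down]; exact hc2
          · have hc2 : nthAvoid 0 b₁ p = p := by
              rw [nthAvoid_high 0 b₁ p (by omega) (by omega)]; omega
            refine ⟨_, Ed.down hv (Vd.even b₁ b₂ r hv (Nat.even_iff.mpr hlen) hlt p (by omega) (by omega)), ?_⟩
            rw [outPort_down]; exact hc2

end Ports
section Tail

lemma desc2 {d : ℕ} (hd : 2 ≤ d) {b₂ : ℕ} {r : List Nd} (hv : Vd d ((d, b₂) :: r))
    (hlen : ((d, b₂) :: r).length % 2 = 0) (hlt : ((d, b₂) :: r).length + 4 ≤ 2 * (d + 1)) :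
    Vd (d + 1) ((d + 1, d - 1) :: (d, b₂) :: r) ∧
      Vd (d + 1) ((d + 1, d) :: (d + 1, d - 1) :: (d, b₂) :: r) := by
  obtain ⟨_, _, _, hbe⟩ := Vd.bnd hv (d, b₂) r rfl
  obtain ⟨hb21, hb22⟩ := hbe hlen
  simp only [] at hb21 hb22
  have e1 : nthAvoid 1 b₂ d = d + 1 := by
    rw [nthAvoid_high 1 b₂ d (by omega) (by omega)]; omega
  have e2 : nthAvoid 0 d d = d - 1 := by
    rw [nthAvoid_low 0 d d (by omega)]; omega
  have hz : Vd (d + 1) ((nthAvoid 1 b₂ d, nthAvoid 0 d d) :: (d, b₂) :: r) :=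
    Vd.even d b₂ r hv.mono (Nat.even_iff.mpr hlen)
      (by simp only [List.length_cons] at hlt ⊢; omega) d (by omega) (by omega)
  rw [e1, e2] at hz
  have e3 : bplus (d - 1) = d - 1 := by unfold bplus; split <;> omega
  have e4 : nthAvoid 1 (bplus (d - 1)) d = d + 1 := by
    rw [e3, nthAvoid_high 1 (d - 1) d (by omega) (by omega)]; omega
  have e5 : nthAvoid 1 (d + 1) d = d := by
    rw [nthAvoid_low 1 (d + 1) d (by omega)]; omega
  have ht : Vd (d + 1) ((nthAvoid 1 (bplus (d - 1)) d, nthAvoid 1 (d + 1) d) ::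
      (d + 1, d - 1) :: (d, b₂) :: r) :=
    Vd.odd (d + 1) (d - 1) ((d, b₂) :: r) hz
      (by rw [Nat.odd_iff]; simp only [List.length_cons] at hlen ⊢; omega)
      (by simp only [List.length_cons] at hlt ⊢; omega) d (by omega) (by omega)
  rw [e4, e5] at ht
  exact ⟨hz, ht⟩

lemma tail2 {d : ℕ} (hd : 2 ≤ d) {v : List Nd} (hv : Vd d v) (hlen : v.length % 2 = 0)
    (hlt : v.length + 4 ≤ 2 * (d + 1)) (hb : v = [] ∨ v.headI.1 ≤ d - 1) :
    ∃ z t, Ed (d + 1) v z ∧ Ed (d + 1) z t ∧ outPort z v = d - 1 ∧ outPort t z = d ∧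
      Vd (d + 1) t ∧ t.length % 2 = 0 ∧ t.length ≤ v.length + 2 ∧
      (t = [] ∨ t.headI.1 ≤ d) := by
  rcases v with _ | ⟨⟨b₁, b₂⟩, r⟩
  · have hz : Vd (d + 1) [(d, d - 1)] := Vd.base (d := d + 1) d (by omega) (by omega)
    refine ⟨[(d, d - 1)], [], Ed.down Vd.nil hz, Ed.up Vd.nil hz, ?_, ?_, Vd.nil,
      by simp, by simp, Or.inl rfl⟩
    · rw [outPort_down]
    · rw [outPort_up]
  · obtain ⟨hb1, hb2, _, hbe⟩ := Vd.bnd hv (b₁, b₂) r rfl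
    obtain ⟨hb21, hb22⟩ := hbe hlen
    simp only [] at hb1 hb2 hb21 hb22
    have hbv : b₁ ≤ d - 1 := by
      rcases hb with h | h
      · exact absurd h (by simp)
      · simpa using h
    by_cases hcase : b₁ = d - 1
    · -- first step goes up to the parent r
      subst hcase
      have hrlen : r.length % 2 = 1 := by
        simp only [List.length_cons] at hlen; omega
      rcases r with _ | ⟨⟨a₁, a₂⟩, r'⟩
      · simp at hrlen
      · obtain ⟨ha1, ha2, hao, _⟩ := Vd.bnd hv.sub (a₁, a₂) r' rfl
        simp only [] at ha1 ha2
        have ha2' : a₂ + 1 ≤ d := hao hrlen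
        have hz : Ed (d + 1) ((d - 1, b₂) :: (a₁, a₂) :: r') ((a₁, a₂) :: r') :=
          Ed.up hv.sub.mono hv.mono
        by_cases had : a₁ = d
        · subst had
          refine ⟨_, r', hz, Ed.up hv.sub.sub.mono hv.sub.mono, ?_, ?_,
            hv.sub.sub.mono, ?_, ?_, ?_⟩
          · rw [outPort_up]
          · rw [outPort_up]
          · simp only [List.length_cons] at hlen ⊢; omega
          · simp only [List.length_cons]; omega
          · rcases r' with _ | ⟨⟨c₁, c₂⟩, r''⟩
            · exact Or.inl rfl
            · exact Or.inr (by simpa using (Vd.bnd hv.sub.sub (c₁, c₂) r'' rfl).2.1)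
        · have ha1' : a₁ ≤ d - 1 := by omega
          have e2 : nthAvoid 1 a₁ (d - 1) = d := by
            rw [nthAvoid_high 1 a₁ (d - 1) (by omega) (by omega)]; omega
          have hbp1 : 1 ≤ bplus a₂ := by unfold bplus; split <;> omega
          have hbp2 : bplus a₂ ≤ d - 1 := by unfold bplus; split <;> omega
          have e1 : nthAvoid 1 (bplus a₂) (d - 1) = d := by
            rw [nthAvoid_high 1 (bplus a₂) (d - 1) (by omega) (by omega)]; omega
          have ht : Vd (d + 1) ((nthAvoid 1 (bplus a₂) (d - 1), nthAvoid 1 a₁ (d - 1)) ::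
              (a₁, a₂) :: r') :=
            Vd.odd a₁ a₂ r' hv.sub.mono (Nat.odd_iff.mpr hrlen)
              (by simp only [List.length_cons] at hlt ⊢; omega) (d - 1) (by omega) (by omega)
          rw [e1, e2] at ht
          refine ⟨_, _, hz, Ed.down hv.sub.mono ht, ?_, ?_, ht, ?_, ?_, Or.inr (by simp)⟩
          · rw [outPort_up]
          · rw [outPort_down]
          · simp only [List.length_cons] at hlen ⊢; omega
          · simp only [List.length_cons]; omega
    · -- first step goes down
      have hb12 : b₁ ≤ d - 2 := by omega
      have ez : nthAvoid 0 b₁ (d - 1) = d - 1 := by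
        rw [nthAvoid_high 0 b₁ (d - 1) (by omega) (by omega)]; omega
      have hz : Vd (d + 1) ((nthAvoid 1 b₂ (d - 1), nthAvoid 0 b₁ (d - 1)) :: (b₁, b₂) :: r) :=
        Vd.even b₁ b₂ r hv.mono (Nat.even_iff.mpr hlen)
          (by simp only [List.length_cons] at hlt ⊢; omega) (d - 1) (by omega) (by omega)
      by_cases hb2d : b₂ = d
      · -- z = (d-1, d-1) :: v, then down again
        have ec : nthAvoid 1 b₂ (d - 1) = d - 1 := by
          rw [hb2d, nthAvoid_low 1 d (d - 1) (by omega)]; omega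
        rw [ec, ez] at hz
        have hbp : bplus (d - 1) = d - 1 := by unfold bplus; split <;> omega
        have e1 : nthAvoid 1 (bplus (d - 1)) (d - 1) = d := by
          rw [hbp, nthAvoid_high 1 (d - 1) (d - 1) (by omega) (by omega)]; omega
        have e2 : nthAvoid 1 (d - 1) (d - 1) = d := by
          rw [nthAvoid_high 1 (d - 1) (d - 1) (by omega) (by omega)]; omega
        have ht : Vd (d + 1) ((nthAvoid 1 (bplus (d - 1)) (d - 1), nthAvoid 1 (d - 1) (d - 1)) ::
            (d - 1, d - 1) :: (b₁, b₂) :: r) :=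
          Vd.odd (d - 1) (d - 1) ((b₁, b₂) :: r) hz
            (by rw [Nat.odd_iff]; simp only [List.length_cons] at hlen ⊢; omega)
            (by simp only [List.length_cons] at hlt ⊢; omega) (d - 1) (by omega) (by omega)
        rw [e1, e2] at ht
        refine ⟨_, _, Ed.down hv.mono hz, Ed.down hz ht, ?_, ?_, ht, ?_, ?_, Or.inr (by simp)⟩
        · rw [outPort_down]
        · rw [outPort_down]
        · simp only [List.length_cons] at hlen ⊢; omega
        · simp only [List.length_cons]; omega
      · -- z = (d, d-1) :: v, bounce back: t = v
        have ec : nthAvoid 1 b₂ (d - 1) = d := by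
          rw [nthAvoid_high 1 b₂ (d - 1) (by omega) (by omega)]; omega
        rw [ec, ez] at hz
        refine ⟨_, _, Ed.down hv.mono hz, Ed.up hv.mono hz, ?_, ?_, hv.mono, hlen,
          by omega, Or.inr (by simpa using hb2)⟩
        · rw [outPort_down]
        · rw [outPort_up]

lemma sep_le {d : ℕ} {v y : List Nd} (hlen : v.length % 2 = 0)
    (hb : v = [] ∨ v.headI.1 ≤ d) (he : Ed (d + 1) v y) : outPort y v ≤ d := by
  rcases port_even_cases hlen he with ⟨a, r, rfl, hp⟩ | ⟨rfl, kk, h1, h2, hp⟩ |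
    ⟨a, r, rfl, j, hj1, hj2, hp⟩
  · rw [hp]
    rcases hb with h | h
    · exact absurd h (by simp)
    · simpa using h
  · omega
  · have := nthAvoid_le 0 a.1 j
    omega

lemma sep_ne {d : ℕ} {z : List Nd} (hlen : ((d + 1, d) :: z).length % 2 = 0)
    {y : List Nd} (he : Ed (d + 1) ((d + 1, d) :: z) y) :
    outPort y ((d + 1, d) :: z) ≠ d := by
  rcases port_even_cases hlen he with ⟨a, r, heq, hp⟩ | ⟨heq, _⟩ |
    ⟨a, r, heq, j, hj1, hj2, hp⟩
  · injection heq with e1 _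
    rw [hp, ← e1]
    simp only []
    omega
  · exact absurd heq (by simp)
  · injection heq with e1 _
    rw [hp, ← e1]
    have h1 := nthAvoid_ge 0 (d + 1, d).1 j
    have h2 := nthAvoid_le 0 (d + 1, d).1 j
    have h3 : nthAvoid 0 (d + 1, d).1 j = 0 + j - 1 :=
      nthAvoid_low 0 (d + 1, d).1 j (by simp only []; omega)
    simp only [] at h3 ⊢
    omega

lemma sep_x_exists {d : ℕ} (hd : 2 ≤ d) {t : List Nd} (ht : Vd (d + 1) t)
    (hlen : t.length % 2 = 0) (hlt : t.length + 2 ≤ 2 * (d + 1))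
    (hb : t = [] ∨ t.headI.1 ≤ d) :
    ∃ x, Ed (d + 1) t x ∧ outPort x t = d := by
  rcases t with _ | ⟨⟨b₁, b₂⟩, r⟩
  · refine ⟨[(d + 1, d)], Ed.down Vd.nil ?_, by rw [outPort_down]⟩
    have := Vd.base (d := d + 1) (d + 1) (by omega) (by omega)
    simpa using this
  · have hbv : b₁ ≤ d := by
      rcases hb with h | h
      · exact absurd h (by simp)
      · simpa using h
    by_cases hbd : b₁ = d
    · subst hbd
      exact ⟨r, Ed.up ht.sub ht, by rw [outPort_up]⟩
    · have e : nthAvoid 0 b₁ d = d := by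
        rw [nthAvoid_high 0 b₁ d (by omega) (by omega)]; omega
      have hch : Vd (d + 1) ((nthAvoid 1 b₂ d, nthAvoid 0 b₁ d) :: (b₁, b₂) :: r) :=
        Vd.even b₁ b₂ r ht (Nat.even_iff.mpr hlen)
          (by simp only [List.length_cons] at hlt ⊢; omega) d (by omega) (by omega)
      exact ⟨_, Ed.down ht hch, by rw [outPort_down]; exact e⟩

end Tail
section Assemble

lemma assemble {d k : ℕ} (hd : 2 ≤ d) {w₁ w₂ : ℕ → List Nd} (hpc : IsPCW d k w₁ w₂)
    {z₁ t₁ z₂ t₂ x : List Nd}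
    (he1 : Ed (d + 1) (w₁ k) z₁) (he1' : Ed (d + 1) z₁ t₁)
    (he2 : Ed (d + 1) (w₂ k) z₂) (he2' : Ed (d + 1) z₂ t₂)
    (hq1 : outPort z₁ (w₁ k) = outPort z₂ (w₂ k))
    (hq2 : outPort t₁ z₁ = outPort t₂ z₂)
    (hx : Ed (d + 1) t₁ x)
    (hs : ∀ y, Ed (d + 1) t₂ y → outPort x t₁ ≠ outPort y t₂) :
    ∃ w₁' w₂' : ℕ → List Nd, IsPSW (d + 1) (k + 2) w₁' w₂' := by
  refine ⟨fun j => if j ≤ k then w₁ j else if j = k + 1 then z₁ else t₁,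
          fun j => if j ≤ k then w₂ j else if j = k + 1 then z₂ else t₂, ?_⟩
  have ee : ∀ (f : ℕ → List Nd) (z t : List Nd),
      (∀ j, j ≤ k → (if j ≤ k then f j else if j = k + 1 then z else t) = f j) ∧
      ((if k + 1 ≤ k then f (k + 1) else if k + 1 = k + 1 then z else t) = z) ∧
      ((if k + 2 ≤ k then f (k + 2) else if k + 2 = k + 1 then z else t) = t) := by
    intro f z t
    refine ⟨fun j hj => if_pos hj, ?_, ?_⟩
    · rw [if_neg (by omega), if_pos rfl]
    · rw [if_neg (by omega), if_neg (by omega)]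
  obtain ⟨E1, E1z, E1t⟩ := ee w₁ z₁ t₁
  obtain ⟨E2, E2z, E2t⟩ := ee w₂ z₂ t₂
  refine ⟨⟨?_, ?_, ?_, ?_, ?_, ?_⟩, ?_⟩
  · have := hpc.klen; omega
  · -- walk₁
    intro j hj
    by_cases h1 : j + 1 ≤ k
    · rw [E1 j (by omega), E1 (j + 1) h1]
      exact (hpc.walk₁ j (by omega)).mono
    · by_cases h2 : j ≤ k
      · have hjk : j = k := by omega
        subst hjk
        rw [E1 j le_rfl, E1z]
        exact he1
      · have hjk : j = k + 1 := by omega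
        subst hjk
        rw [E1z, E1t]
        exact he1'
  · -- walk₂
    intro j hj
    by_cases h1 : j + 1 ≤ k
    · rw [E2 j (by omega), E2 (j + 1) h1]
      exact (hpc.walk₂ j (by omega)).mono
    · by_cases h2 : j ≤ k
      · have hjk : j = k := by omega
        subst hjk
        rw [E2 j le_rfl, E2z]
        exact he2
      · have hjk : j = k + 1 := by omega
        subst hjk
        rw [E2z, E2t]
        exact he2'
  · rw [E1 0 (by omega)]; exact hpc.start₁
  · rw [E2 0 (by omega)]; exact hpc.start₂
  · -- compat
    intro j hj1 hj2
    by_cases h1 : j ≤ k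
    · rw [E1 j h1, E1 (j - 1) (by omega), E2 j h1, E2 (j - 1) (by omega)]
      exact hpc.compat j hj1 h1
    · by_cases h2 : j = k + 1
      · subst h2
        rw [show k + 1 - 1 = k by omega, E1z, E1 k le_rfl, E2z, E2 k le_rfl]
        exact hq1
      · have h3 : j = k + 2 := by omega
        subst h3
        rw [show k + 2 - 1 = k + 1 by omega, E1t, E1z, E2t, E2z]
        exact hq2
  · -- sep
    rw [E1t, E2t]
    exact ⟨x, hx, hs⟩

end Assemble
section Cases

lemma caseB {d k : ℕ} (hd : 2 ≤ d) {w₁ w₂ : ℕ → List Nd} (hpc : IsPCW d k w₁ w₂)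
    {b₂ : ℕ} {r : List Nd} (hw1 : w₁ k = (d, b₂) :: r)
    (hv1 : Vd d (w₁ k)) (hv2 : Vd d (w₂ k))
    (hpar1 : (w₁ k).length % 2 = 0) (hpar2 : (w₂ k).length % 2 = 0)
    (hlt1 : (w₁ k).length + 4 ≤ 2 * (d + 1)) (hlt2 : (w₂ k).length + 4 ≤ 2 * (d + 1))
    (hb2 : w₂ k = [] ∨ (w₂ k).headI.1 ≤ d - 1) :
    ∃ w₁' w₂' : ℕ → List Nd, IsPSW (d + 1) (k + 2) w₁' w₂' := by
  have hv1' : Vd d ((d, b₂) :: r) := hw1 ▸ hv1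
  obtain ⟨hz, ht⟩ := desc2 hd hv1' (hw1 ▸ hpar1) (hw1 ▸ hlt1)
  obtain ⟨z₂, t₂, he2, he2', hp2, hp2', hvt2, hlen2', hll2, hb2'⟩ :=
    tail2 hd hv2 hpar2 hlt2 hb2
  refine assemble hd hpc (z₁ := (d + 1, d - 1) :: (d, b₂) :: r)
    (t₁ := (d + 1, d) :: (d + 1, d - 1) :: (d, b₂) :: r)
    (x := (d + 1, d - 1) :: (d, b₂) :: r) ?_ ?_ he2 he2' ?_ ?_ ?_ ?_
  · rw [hw1]; exact Ed.down hv1'.mono hz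
  · exact Ed.down hz ht
  · rw [hw1, outPort_down, hp2]
  · rw [outPort_down, hp2']
  · exact Ed.up hz ht
  · intro y hy
    rw [outPort_up]
    have hle := sep_le hlen2' hb2' hy
    show d + 1 ≠ outPort y t₂
    omega

lemma caseA {d k : ℕ} (hd : 2 ≤ d) {w₁ w₂ : ℕ → List Nd} (hpc : IsPCW d k w₁ w₂)
    {b₂ : ℕ} {r : List Nd} (hw2 : w₂ k = (d, b₂) :: r)
    (hv1 : Vd d (w₁ k)) (hv2 : Vd d (w₂ k))
    (hpar1 : (w₁ k).length % 2 = 0) (hpar2 : (w₂ k).length % 2 = 0)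
    (hlt1 : (w₁ k).length + 4 ≤ 2 * (d + 1)) (hlt2 : (w₂ k).length + 4 ≤ 2 * (d + 1))
    (hb1 : w₁ k = [] ∨ (w₁ k).headI.1 ≤ d - 1) :
    ∃ w₁' w₂' : ℕ → List Nd, IsPSW (d + 1) (k + 2) w₁' w₂' := by
  have hv2' : Vd d ((d, b₂) :: r) := hw2 ▸ hv2
  obtain ⟨hz, ht⟩ := desc2 hd hv2' (hw2 ▸ hpar2) (hw2 ▸ hlt2)
  obtain ⟨z₁, t₁, he1, he1', hp1, hp1', hvt1, hlen1', hll1, hb1'⟩ :=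
    tail2 hd hv1 hpar1 hlt1 hb1
  obtain ⟨x, hxe, hxp⟩ := sep_x_exists hd hvt1 hlen1' (by omega) hb1'
  have hlent2 : ((d + 1, d) :: (d + 1, d - 1) :: (d, b₂) :: r).length % 2 = 0 := by
    have := hw2 ▸ hpar2
    simp only [List.length_cons] at this ⊢
    omega
  refine assemble hd hpc (z₂ := (d + 1, d - 1) :: (d, b₂) :: r)
    (t₂ := (d + 1, d) :: (d + 1, d - 1) :: (d, b₂) :: r)
    he1 he1' ?_ ?_ ?_ ?_ hxe ?_
  · rw [hw2]; exact Ed.down hv2'.mono hz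
  · exact Ed.down hz ht
  · rw [hp1, hw2, outPort_down]
  · rw [hp1', outPort_down]
  · intro y hy
    rw [hxp]
    exact (sep_ne hlent2 hy).symm

end Cases
/-- A PSW of length `k` in `G_d` can be extended to a PSW of length `k + 2`
in `G_{d+1}`. -/
theorem PSW_extend (d k : ℕ) (hd : 2 ≤ d) (w₁ w₂ : ℕ → List Nd)
    (hpsw : IsPSW d k w₁ w₂) :
    ∃ w₁' w₂' : ℕ → List Nd, IsPSW (d + 1) (k + 2) w₁' w₂' := by
  obtain ⟨x, hx, hsep⟩ := hpsw.sep
  have hpc := hpsw.toIsPCW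
  have hk := hpc.klen
  have hv1 : Vd d (w₁ k) := hx.1
  have hv2 : Vd d (w₂ k) := by
    rcases Nat.eq_zero_or_pos k with hk0 | hkpos
    · subst hk0
      rw [hpc.start₂]
      have := Vd.base (d := d) 2 (by omega) hd
      simpa using this
    · have h := hpc.walk₂ (k - 1) (by omega)
      rw [show k - 1 + 1 = k by omega] at h
      exact h.2.1
  obtain ⟨hlen1, hparw1⟩ := walk_bound (by rw [hpc.start₁]; rfl) hpc.walk₁ k le_rfl
  obtain ⟨hlen2, hparw2⟩ := walk_bound (by rw [hpc.start₂]; rfl) hpc.walk₂ k le_rfl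
  by_cases hpar : (w₁ k).length % 2 = 1
  · -- both endpoints at odd depth: separation is impossible
    have hpar2 : (w₂ k).length % 2 = 1 := by omega
    obtain ⟨hp1, hp2⟩ := port_odd_range hv1 hpar hx
    obtain ⟨y, hy, hyp⟩ := follow_odd_exists hv2 hpar2 (by omega) hp1 hp2
    exact absurd hyp.symm (hsep y hy)
  · -- both endpoints at even depth
    have hpar1 : (w₁ k).length % 2 = 0 := by omega
    have hpar2 : (w₂ k).length % 2 = 0 := by omega
    have hlt1 : (w₁ k).length + 4 ≤ 2 * (d + 1) := by omega
    have hlt2 : (w₂ k).length + 4 ≤ 2 * (d + 1) := by omega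
    have hple : outPort x (w₁ k) ≤ d := by
      rcases port_even_cases hpar1 hx with ⟨a, rr, heq, hp⟩ | ⟨heq, kk, h1, h2, hp⟩ |
        ⟨a, rr, heq, j, hj1, hj2, hp⟩
      · rw [hp]; exact (Vd.bnd hv1 a rr heq).2.1
      · omega
      · have := nthAvoid_le 0 a.1 j; omega
    have hnf : ∀ pp, ((w₂ k = [] ∧ pp + 1 ≤ d) ∨
        ∃ a rr, w₂ k = a :: rr ∧ (pp = a.1 ∨ (pp + 1 ≤ d ∧ (a.1 ≤ pp ∨ pp + 2 ≤ d)))) →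
        outPort x (w₁ k) ≠ pp := by
      intro pp hcc hEq
      obtain ⟨y, hy, hyp⟩ := follow_even_exists hv2 hpar2 (by omega) hcc
      exact hsep y hy (by rw [hEq, hyp])
    rcases hw2e : w₂ k with _ | ⟨⟨c₁, c₂⟩, r₂⟩
    · -- w₂ k is the root: p = d and the head of w₁ k is d
      have hpd : outPort x (w₁ k) = d := by
        by_contra hne
        exact hnf (outPort x (w₁ k)) (Or.inl ⟨hw2e, by omega⟩) rfl
      rcases port_even_cases hpar1 hx with ⟨a, rr, heq, hp⟩ | ⟨heq, kk, h1, h2, hp⟩ |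
        ⟨a, rr, heq, j, hj1, hj2, hp⟩
      · obtain ⟨a1, a2⟩ := a
        have ha1 : a1 = d := by
          have : (a1, a2).1 = d := by rw [← hp, hpd]
          simpa using this
        rw [ha1] at heq
        exact caseB hd hpc heq hv1 hv2 hpar1 hpar2 hlt1 hlt2 (Or.inl hw2e)
      · omega
      · have := nthAvoid_le 0 a.1 j; omega
    · have hbc := Vd.bnd (hw2e ▸ hv2) (c₁, c₂) r₂ rfl
      have hc1le : c₁ ≤ d := by simpa using hbc.2.1
      by_cases hcd : c₁ = d
      · -- case (a): the head of w₂ k is d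
        rw [hcd] at hw2e
        have hv1cond : w₁ k = [] ∨ (w₁ k).headI.1 ≤ d - 1 := by
          rcases hw1e : w₁ k with _ | ⟨⟨a1, a2⟩, r₁⟩
          · exact Or.inl rfl
          · right
            simp only [List.headI]
            by_contra hgt
            have ha1d : a1 = d := by
              have := (Vd.bnd (hw1e ▸ hv1) (a1, a2) r₁ rfl).2.1
              simp only [] at this
              omega
            -- every possible port p from w₁ k is then matched from w₂ k
            rcases port_even_cases (hw1e ▸ hpar1) (hw1e ▸ hx) with
              ⟨a, rr, heq, hp⟩ | ⟨heq, kk, h1, h2, hp⟩ |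
              ⟨a, rr, heq, j, hj1, hj2, hp⟩
            · injection heq with e1 _
              rw [← e1] at hp
              simp only [] at hp
              have hp' : outPort x (w₁ k) = a1 := by rw [hw1e]; exact hp
              exact hnf a1 (Or.inr ⟨(d, c₂), r₂, hw2e, Or.inl (by simp only []; omega)⟩) hp'
            · exact absurd heq (by simp)
            · injection heq with e1 _
              rw [← e1] at hp
              simp only [] at hp
              have hj' : nthAvoid 0 a1 j = j - 1 := by
                rw [nthAvoid_low 0 a1 j (by omega)]; omega
              have hp' : outPort x (w₁ k) = j - 1 := by rw [hw1e, hp, hj']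
              exact hnf (j - 1)
                (Or.inr ⟨(d, c₂), r₂, hw2e, Or.inr ⟨by omega, Or.inr (by omega)⟩⟩) hp'
        exact caseA hd hpc hw2e hv1 hv2 hpar1 hpar2 hlt1 hlt2 hv1cond
      · -- case (b): p = d and the head of w₁ k is d
        have hc1d : c₁ ≤ d - 1 := by omega
        have hpd : outPort x (w₁ k) = d := by
          by_contra hne
          by_cases hpc1 : outPort x (w₁ k) = c₁
          · exact hnf _ (Or.inr ⟨(c₁, c₂), r₂, hw2e, Or.inl (by simpa using hpc1)⟩) rfl
          · refine hnf _ (Or.inr ⟨(c₁, c₂), r₂, hw2e, Or.inr ⟨by omega, ?_⟩⟩) rfl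
            simp only []
            rcases Nat.lt_or_ge (outPort x (w₁ k)) c₁ with hh | hh
            · exact Or.inr (by omega)
            · exact Or.inl hh
        rcases port_even_cases hpar1 hx with ⟨a, rr, heq, hp⟩ | ⟨heq, kk, h1, h2, hp⟩ |
          ⟨a, rr, heq, j, hj1, hj2, hp⟩
        · obtain ⟨a1, a2⟩ := a
          have ha1 : a1 = d := by
            have : (a1, a2).1 = d := by rw [← hp, hpd]
            simpa using this
          rw [ha1] at heq
          refine caseB hd hpc heq hv1 hv2 hpar1 hpar2 hlt1 hlt2 (Or.inr ?_)
          rw [hw2e]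
          simpa using hc1d
        · omega
        · have := nthAvoid_le 0 a.1 j; omega

end Paper
end

section
/- Let (v̄₁, v̄₂), where v̄_i = (v₀^i, v₁^i, ..., v_k^i) for i = 1,2, be a critical pair of separating walks in G_d. Then v_{k−1}^i ∈ V_d \ V_{d−1} for some i ∈ {1,2}. -/
namespace Paper

lemma vd_tail {m : ℕ} {a : Nd} {l : List Nd} (h : Vd m (a :: l)) : Vd m l := by
  cases h with
  | base k h1 h2 => exact Vd.nil
  | odd b₁ b₂ rest hv hodd hlt j hj1 hj2 => exact hv
  | even b₁ b₂ rest hv heven hlt j hj1 hj2 => exact hv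

lemma vd_len {m : ℕ} {l : List Nd} (h : Vd m l) : l.length ≤ 2 * m := by
  induction h with
  | nil => simp
  | base k h1 h2 => simp; omega
  | odd b₁ b₂ rest hv hodd hlt j hj1 hj2 ih => simp only [List.length_cons] at hlt ⊢; omega
  | even b₁ b₂ rest hv heven hlt j hj1 hj2 ih => simp only [List.length_cons] at hlt ⊢; omega

lemma vd_mem {m : ℕ} {l : List Nd} (h : Vd m l) :
    ∀ p ∈ l, 1 ≤ p.1 ∧ p.1 ≤ m ∧ p.2 ≤ m := by
  induction h with
  | nil => simp
  | base k h1 h2 =>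
      intro p hp
      simp only [List.mem_singleton] at hp
      subst hp
      exact ⟨h1, h2, by omega⟩
  | odd b₁ b₂ rest hv hodd hlt j hj1 hj2 ih =>
      intro p hp
      rcases List.mem_cons.1 hp with rfl | hp
      · refine ⟨?_, ?_, ?_⟩ <;> (simp only; unfold nthAvoid; split <;> omega)
      · exact ih p hp
  | even b₁ b₂ rest hv heven hlt j hj1 hj2 ih =>
      intro p hp
      rcases List.mem_cons.1 hp with rfl | hp
      · refine ⟨?_, ?_, ?_⟩ <;> (simp only; unfold nthAvoid; split <;> omega)
      · exact ih p hp

lemma vd_cons_inv {m : ℕ} {a b : Nd} {l : List Nd} (h : Vd m (a :: b :: l)) :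
    ∃ j, 1 ≤ j ∧ j ≤ m - 1 ∧ (b :: l).length < 2 * m ∧
      ((Odd (b :: l).length ∧ a = (nthAvoid 1 (bplus b.2) j, nthAvoid 1 b.1 j)) ∨
       (Even (b :: l).length ∧ a = (nthAvoid 1 b.2 j, nthAvoid 0 b.1 j))) := by
  cases h with
  | odd b₁ b₂ rest hv hodd hlt j hj1 hj2 => exact ⟨j, hj1, hj2, hlt, Or.inl ⟨hodd, rfl⟩⟩
  | even b₁ b₂ rest hv heven hlt j hj1 hj2 => exact ⟨j, hj1, hj2, hlt, Or.inr ⟨heven, rfl⟩⟩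

lemma vd_single_inv {m : ℕ} {a : Nd} (h : Vd m [a]) :
    ∃ n, 1 ≤ n ∧ n ≤ m ∧ a = (n, n - 1) := by
  cases h with
  | base n h1 h2 => exact ⟨n, h1, h2, rfl⟩

lemma outPort_child_s9 (a : Nd) (l : List Nd) : outPort (a :: l) l = a.2 := by
  unfold outPort
  rw [if_neg (by simp only [List.length_cons]; omega)]
  rfl

lemma outPort_parent_s9 (a : Nd) (l : List Nd) : outPort l (a :: l) = a.1 := by
  unfold outPort
  rw [if_pos (by simp)]
  rfl

lemma ed_len {d : ℕ} {v u : List Nd} (h : Ed d v u) :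
    u.length = v.length + 1 ∨ v.length = u.length + 1 := by
  obtain ⟨-, -, a, rfl | rfl⟩ := h
  · left; simp
  · right; simp

/-- Realizing any backward port `p ∈ {1,…,d}` at a node of odd length. -/
lemma realize_odd {d : ℕ} (hd : 2 ≤ d) {b₁ b₂ : ℕ} {t : List Nd}
    (h₂ : Vd d ((b₁, b₂) :: t)) (hodd : Odd ((b₁, b₂) :: t).length)
    (hlen : ((b₁, b₂) :: t).length < 2 * d) (p : ℕ) (hp1 : 1 ≤ p) (hp2 : p ≤ d) :
    ∃ y, Ed d ((b₁, b₂) :: t) y ∧ outPort y ((b₁, b₂) :: t) = p := by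
  have hb := vd_mem h₂ (b₁, b₂) List.mem_cons_self
  simp only at hb
  by_cases hpb : p = b₁
  · refine ⟨t, ⟨h₂, vd_tail h₂, (b₁, b₂), Or.inr rfl⟩, ?_⟩
    rw [outPort_parent_s9]; omega
  · rcases Nat.lt_or_ge p b₁ with hlt | hge
    · refine ⟨_, ⟨h₂, Vd.odd b₁ b₂ t h₂ hodd hlen p hp1 (by omega), _, Or.inl rfl⟩, ?_⟩
      rw [outPort_child_s9]
      show nthAvoid 1 b₁ p = p
      unfold nthAvoid; split <;> omega
    · refine ⟨_, ⟨h₂, Vd.odd b₁ b₂ t h₂ hodd hlen (p - 1) (by omega) (by omega), _,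
        Or.inl rfl⟩, ?_⟩
      rw [outPort_child_s9]
      show nthAvoid 1 b₁ (p - 1) = p
      unfold nthAvoid; split <;> omega

/-- Realizing backward ports at a node of even length. -/
lemma realize_even {d : ℕ} (hd : 2 ≤ d) {v₂ : List Nd}
    (h₂ : Vd d v₂) (hev : v₂.length % 2 = 0) (hlen : v₂.length < 2 * d)
    (p : ℕ) (hp : p ≤ d - 1) (hpd : v₂.headI.1 = d → p ≤ d - 2) :
    ∃ y, Ed d v₂ y ∧ outPort y v₂ = p := by
  rcases v₂ with _ | ⟨⟨b₁, b₂⟩, t⟩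
  · have hb : Vd d [(p + 1, p + 1 - 1)] := Vd.base (p + 1) (by omega) (by omega)
    refine ⟨[(p + 1, p)], ⟨Vd.nil, by simpa using hb, (p + 1, p), Or.inl rfl⟩, ?_⟩
    rw [outPort_child_s9]
  · have hb := vd_mem h₂ (b₁, b₂) List.mem_cons_self
    simp only at hb
    have hev' : Even ((b₁, b₂) :: t).length := Nat.even_iff.mpr hev
    have hpd' : b₁ = d → p ≤ d - 2 := fun hbd => hpd (by simp [hbd])
    by_cases hpb : p = b₁
    · refine ⟨t, ⟨h₂, vd_tail h₂, (b₁, b₂), Or.inr rfl⟩, ?_⟩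
      rw [outPort_parent_s9]; omega
    · rcases Nat.lt_or_ge p b₁ with hlt | hge
      · refine ⟨_, ⟨h₂, Vd.even b₁ b₂ t h₂ hev' hlen (p + 1) (by omega) (by omega), _,
          Or.inl rfl⟩, ?_⟩
        rw [outPort_child_s9]
        show nthAvoid 0 b₁ (p + 1) = p
        unfold nthAvoid; split <;> omega
      · refine ⟨_, ⟨h₂, Vd.even b₁ b₂ t h₂ hev' hlen p (by omega) (by omega), _,
          Or.inl rfl⟩, ?_⟩
        rw [outPort_child_s9]
        show nthAvoid 0 b₁ p = p
        unfold nthAvoid; split <;> omega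

/-- Bounds on the backward port of a neighbour of a node of odd length. -/
lemma port_bounds_odd {d : ℕ} (hd : 2 ≤ d) {v₁ x : List Nd}
    (hx : Ed d v₁ x) (hl : v₁.length % 2 = 1) :
    1 ≤ outPort x v₁ ∧ outPort x v₁ ≤ d := by
  obtain ⟨hv₁, hvx, a, rfl | rfl⟩ := hx
  · rw [outPort_child_s9]
    rcases v₁ with _ | ⟨b, t⟩
    · simp at hl
    · obtain ⟨j, hj1, hj2, -, ⟨-, rfl⟩ | ⟨hev, -⟩⟩ := vd_cons_inv hvx
      · show 1 ≤ nthAvoid 1 b.1 j ∧ nthAvoid 1 b.1 j ≤ d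
        unfold nthAvoid; split <;> omega
      · have := Nat.even_iff.mp hev; omega
  · rw [outPort_parent_s9]
    have := vd_mem hv₁ a List.mem_cons_self
    exact ⟨this.1, this.2.1⟩

/-- Bounds on the backward port of a neighbour of a node of even length. -/
lemma port_bounds_even {d : ℕ} (hd : 2 ≤ d) {v₁ x : List Nd}
    (hx : Ed d v₁ x) (hl : v₁.length % 2 = 0) :
    outPort x v₁ ≤ d ∧ (outPort x v₁ = d → v₁.headI.1 = d) ∧
      (v₁.headI.1 = d → (outPort x v₁ = d ∨ outPort x v₁ ≤ d - 2)) := by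
  obtain ⟨hv₁, hvx, a, rfl | rfl⟩ := hx
  · rw [outPort_child_s9]
    rcases v₁ with _ | ⟨b, t⟩
    · obtain ⟨n, hn1, hn2, rfl⟩ := vd_single_inv hvx
      have h0 : (([] : List Nd).headI).1 = 0 := rfl
      rw [h0]
      show n - 1 ≤ d ∧ (n - 1 = d → 0 = d) ∧ (0 = d → (n - 1 = d ∨ n - 1 ≤ d - 2))
      omega
    · obtain ⟨j, hj1, hj2, -, ⟨hod, -⟩ | ⟨-, rfl⟩⟩ := vd_cons_inv hvx
      · have := Nat.odd_iff.mp hod; omega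
      · have hbb := vd_mem hv₁ b List.mem_cons_self
        simp only [List.headI_cons]
        show nthAvoid 0 b.1 j ≤ d ∧ (nthAvoid 0 b.1 j = d → b.1 = d) ∧
          (b.1 = d → nthAvoid 0 b.1 j = d ∨ nthAvoid 0 b.1 j ≤ d - 2)
        unfold nthAvoid; split <;> omega
  · rw [outPort_parent_s9]
    have ha := vd_mem hv₁ a List.mem_cons_self
    simp only [List.headI_cons]
    exact ⟨ha.2.1, fun hc => hc, fun hc => Or.inl hc⟩

/-- If the previous node lies in `V_{d-1}` (and has odd length), then the
backward port along the last step equals `d` iff the new node's head first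
component is `d`. -/
lemma outPort_eq_d_iff {d : ℕ} (hd : 2 ≤ d) {w v : List Nd}
    (h' : Vd (d - 1) w) (hw : w.length % 2 = 1) (hE : Ed d w v) :
    outPort v w = d ↔ v.headI.1 = d := by
  obtain ⟨hvw, hvv, a, rfl | rfl⟩ := hE
  · -- v = a :: w : the step goes down
    rw [outPort_child_s9]
    rcases w with _ | ⟨b, t⟩
    · simp at hw
    · have hb := vd_mem h' b List.mem_cons_self
      have hbp : 1 ≤ bplus b.2 ∧ bplus b.2 ≤ d - 1 := by unfold bplus; split <;> omega
      obtain ⟨j, hj1, hj2, -, ⟨-, rfl⟩ | ⟨hev, -⟩⟩ := vd_cons_inv hvv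
      · simp only [List.headI_cons]
        show nthAvoid 1 b.1 j = d ↔ nthAvoid 1 (bplus b.2) j = d
        constructor
        · intro h2
          unfold nthAvoid at h2 ⊢
          split at h2 <;> split <;> omega
        · intro h2
          unfold nthAvoid at h2 ⊢
          split at h2 <;> split <;> omega
      · have := Nat.even_iff.mp hev; omega
  · -- w = a :: v : the step goes up
    rw [outPort_parent_s9]
    have ha := vd_mem h' a List.mem_cons_self
    constructor
    · intro h2; omega
    · intro h2
      exfalso
      rcases v with _ | ⟨c, t⟩
      · have h0 : (([] : List Nd).headI).1 = 0 := rfl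
        rw [h0] at h2; omega
      · have hc := vd_mem h' c (by simp)
        simp only [List.headI_cons] at h2
        omega

/-- At odd-length nodes, every backward port of a neighbour of `v₁` is matched
by a neighbour of `v₂`. -/
lemma match_odd {d : ℕ} (hd : 2 ≤ d) {v₁ v₂ x : List Nd}
    (h₂ : Vd d v₂) (hl₂ : v₂.length % 2 = 1) (hlen : v₂.length < 2 * d)
    (hx : Ed d v₁ x) (hl₁ : v₁.length % 2 = 1) :
    ∃ y, Ed d v₂ y ∧ outPort y v₂ = outPort x v₁ := by
  obtain ⟨hp1, hp2⟩ := port_bounds_odd hd hx hl₁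
  rcases v₂ with _ | ⟨⟨b₁, b₂⟩, t⟩
  · simp at hl₂
  · exact realize_odd hd h₂ (Nat.odd_iff.mpr hl₂) hlen _ hp1 hp2

/-- At even-length nodes whose heads agree on being `d`, every backward port
of a neighbour of `v₁` is matched by a neighbour of `v₂`. -/
lemma match_even {d : ℕ} (hd : 2 ≤ d) {v₁ v₂ x : List Nd}
    (h₂ : Vd d v₂) (hl₂ : v₂.length % 2 = 0) (hlen : v₂.length < 2 * d)
    (hx : Ed d v₁ x) (hl₁ : v₁.length % 2 = 0)
    (hiff : v₁.headI.1 = d ↔ v₂.headI.1 = d) :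
    ∃ y, Ed d v₂ y ∧ outPort y v₂ = outPort x v₁ := by
  obtain ⟨hp2, hpd, hdp⟩ := port_bounds_even hd hx hl₁
  by_cases hh : v₂.headI.1 = d
  · rcases hdp (hiff.mpr hh) with hpd' | hple
    · rcases v₂ with _ | ⟨b, t⟩
      · exfalso
        have h0 : (([] : List Nd).headI).1 = 0 := rfl
        rw [h0] at hh; omega
      · refine ⟨t, ⟨h₂, vd_tail h₂, b, Or.inr rfl⟩, ?_⟩
        rw [outPort_parent_s9, hpd']
        simpa using hh
    · exact realize_even hd h₂ hl₂ hlen _ (by omega) (fun _ => hple)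
  · have hp_ne : outPort x v₁ ≠ d := fun hc => hh (hiff.mp (hpd hc))
    exact realize_even hd h₂ hl₂ hlen _ (by omega) (fun hc => absurd hc hh)

/-- In a critical PSW in `G_d`, the second-to-last node of one of the walks
lies in `V_d \ V_{d−1}`. -/
theorem criticalPSW_new_node (d k : ℕ) (hd : 2 ≤ d) (w₁ w₂ : ℕ → List Nd)
    (h : IsCriticalPSW d k w₁ w₂) :
    ¬ Vd (d - 1) (w₁ (k - 1)) ∨ ¬ Vd (d - 1) (w₂ (k - 1)) := by
  by_contra hcon
  push_neg at hcon
  obtain ⟨h₁, h₂⟩ := hcon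
  obtain ⟨hpsw, -⟩ := h
  obtain ⟨x, hx, hmatch⟩ := hpsw.sep
  have hpcw := hpsw.toIsPCW
  rcases Nat.eq_zero_or_pos k with rfl | hk
  · -- k = 0 : both endpoints have length 1 (odd), so separation is impossible
    have hv2 : Vd d (w₂ 0) := by
      rw [hpcw.start₂]
      have : Vd d [(2, 2 - 1)] := Vd.base 2 (by omega) hd
      simpa using this
    have hl₂ : (w₂ 0).length % 2 = 1 := by rw [hpcw.start₂]; rfl
    have hlen : (w₂ 0).length < 2 * d := by rw [hpcw.start₂]; simp; omega
    have hl₁ : (w₁ 0).length % 2 = 1 := by rw [hpcw.start₁]; rfl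
    obtain ⟨y, hy, hp⟩ := match_odd hd hv2 hl₂ hlen hx hl₁
    exact hmatch y hy hp.symm
  · have hklt : k - 1 < k := by omega
    have hkk : k - 1 + 1 = k := by omega
    have hE₁ : Ed d (w₁ (k - 1)) (w₁ k) := by
      have := hpcw.walk₁ (k - 1) hklt; rwa [hkk] at this
    have hE₂ : Ed d (w₂ (k - 1)) (w₂ k) := by
      have := hpcw.walk₂ (k - 1) hklt; rwa [hkk] at this
    have hV2 : Vd d (w₂ k) := hE₂.2.1
    have hpar : ∀ j, j ≤ k →
        (w₁ j).length % 2 = (j + 1) % 2 ∧ (w₂ j).length % 2 = (j + 1) % 2 := by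
      intro j
      induction j with
      | zero => intro _; rw [hpcw.start₁, hpcw.start₂]; simp
      | succ n ih =>
        intro hnk
        have e1 := ed_len (hpcw.walk₁ n (by omega))
        have e2 := ed_len (hpcw.walk₂ n (by omega))
        have := ih (by omega)
        omega
    have hlen2 : (w₂ k).length < 2 * d := by
      have l1 := vd_len h₂
      have l2 := ed_len hE₂
      omega
    obtain ⟨hp1k, hp2k⟩ := hpar k le_rfl
    rcases Nat.mod_two_eq_zero_or_one ((w₁ k).length) with hev | hod
    · -- endpoints of even length
      have hev2 : (w₂ k).length % 2 = 0 := by omega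
      have hw1odd : (w₁ (k - 1)).length % 2 = 1 := by
        have := ed_len hE₁; omega
      have hw2odd : (w₂ (k - 1)).length % 2 = 1 := by
        have := ed_len hE₂; omega
      have hq := hpcw.compat k hk le_rfl
      have i₁ := outPort_eq_d_iff hd h₁ hw1odd hE₁
      have i₂ := outPort_eq_d_iff hd h₂ hw2odd hE₂
      have hiff : (w₁ k).headI.1 = d ↔ (w₂ k).headI.1 = d := by
        rw [← i₁, ← i₂, hq]
      obtain ⟨y, hy, hp⟩ := match_even hd hV2 hev2 hlen2 hx hev hiff
      exact hmatch y hy hp.symm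
    · -- endpoints of odd length
      have hod2 : (w₂ k).length % 2 = 1 := by omega
      obtain ⟨y, hy, hp⟩ := match_odd hd hV2 hod2 hlen2 hx hod
      exact hmatch y hy hp.symm

end Paper
end
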